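/- arXiv:2004.12717 — 5 statements merged into one kernel-verified Lean document; each statement's English description precedes it below -/
import Mathlib

section
/- Let {H; E; D} be a quantized domain and T ∈ C*_E(D). Then T, as a densely defined operator on H with domain D, satisfies D ⊆ dom(T*) (Hilbert space adjoint), T*(H_ℓ) ⊆ H_ℓ for all ℓ ∈ Ω, and the restriction T* := T*|_D belongs to C*_E(D). Consequently C*_E(D) is a unital *-algebra. -/
/-- If `T ∈ C*_E(D)`, then the union space `D` is contained in the domain of
the Hilbert-space adjoint of `T`; the adjoint leaves every `Hℓ` invariant and its
restriction `T* := T†|_D` again belongs to `C*_E(D)` (so `C*_E(D)` is a unital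
*-algebra). -/
theorem stmt4
    {Ω : Type*} [Preorder Ω] [IsDirected Ω (· ≤ ·)] [Nonempty Ω]
    {H : Type*} [NormedAddCommGroup H] [InnerProductSpace ℂ H] [CompleteSpace H]
    (E : Ω → Submodule ℂ H)
    (hclosed : ∀ ℓ, IsClosed (E ℓ : Set H))
    (hmono : Monotone E)
    (hdense : Dense (⋃ ℓ, (E ℓ : Set H)))
    (Dsub : Submodule ℂ H)
    (hD : ∀ x : H, x ∈ Dsub ↔ ∃ ℓ, x ∈ E ℓ)
    (T : Dsub →ₗ[ℂ] H)
    -- `T ∈ C*_E(D)`: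
    (hTD : ∀ d : Dsub, T d ∈ Dsub)
    (hTinv : ∀ ℓ (d : Dsub), (d : H) ∈ E ℓ → T d ∈ E ℓ)
    (hTbdd : ∀ ℓ, ∃ C : ℝ, 0 ≤ C ∧ ∀ d : Dsub, (d : H) ∈ E ℓ → ‖T d‖ ≤ C * ‖(d : H)‖)
    (hTperp : ∀ ℓ (d : Dsub), (d : H) ∈ (E ℓ)ᗮ → T d ∈ (E ℓ)ᗮ) :
    ∃ S : Dsub →ₗ[ℂ] H,
      -- `S` is the restriction to `D` of the Hilbert space adjoint of `T`
      -- (in particular every `ξ ∈ D` lies in `dom T†`):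
      (∀ d d' : Dsub, (inner ℂ (T d) ((d' : H)) : ℂ) = inner ℂ ((d : H)) (S d')) ∧
      -- `T†(Hℓ) ⊆ Hℓ` and `S = T†|_D ∈ C*_E(D)`:
      (∀ d : Dsub, S d ∈ Dsub) ∧
      (∀ ℓ (d : Dsub), (d : H) ∈ E ℓ → S d ∈ E ℓ) ∧
      (∀ ℓ, ∃ C : ℝ, 0 ≤ C ∧ ∀ d : Dsub, (d : H) ∈ E ℓ → ‖S d‖ ≤ C * ‖(d : H)‖) ∧
      (∀ ℓ (d : Dsub), (d : H) ∈ (E ℓ)ᗮ → S d ∈ (E ℓ)ᗮ) := by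
  classical
  have hle : ∀ ℓ, E ℓ ≤ Dsub := fun ℓ x hx => (hD x).2 ⟨ℓ, hx⟩
  -- uniqueness from density of `D`
  have huniq : ∀ y : H, (∀ d : Dsub, (inner ℂ ((d : H)) y : ℂ) = 0) → y = 0 := by
    intro y hy
    have hz : Set.EqOn (fun x : H => (inner ℂ y x : ℂ)) (fun _ => (0 : ℂ))
        (⋃ ℓ, (E ℓ : Set H)) := by
      intro x hx
      rcases Set.mem_iUnion.1 hx with ⟨ℓ, hxℓ⟩
      have := hy ⟨x, hle ℓ hxℓ⟩
      simpa using congrArg (starRingEnd ℂ) this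
    have hcont : Continuous fun x : H => (inner ℂ y x : ℂ) := (innerSL ℂ y).continuous
    have hfun := Continuous.ext_on hdense hcont continuous_const hz
    exact inner_self_eq_zero.mp (congrFun hfun y)
  -- for each ℓ, the adjoint of the restriction of T to E ℓ
  have hSl : ∀ ℓ, ∃ Sl : E ℓ →L[ℂ] E ℓ,
      ∀ (x y : E ℓ), (inner ℂ (T (Submodule.inclusion (hle ℓ) x)) ((y : H)) : ℂ)
        = inner ℂ ((x : H)) ((Sl y : H)) := by
    intro ℓ
    haveI : CompleteSpace (E ℓ) := (hclosed ℓ).completeSpace_coe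
    obtain ⟨C, hC0, hC⟩ := hTbdd ℓ
    let f : E ℓ →ₗ[ℂ] E ℓ :=
      (T.comp (Submodule.inclusion (hle ℓ))).codRestrict (E ℓ)
        (fun x => hTinv ℓ (Submodule.inclusion (hle ℓ) x) x.2)
    have hfb : ∀ x : E ℓ, ‖f x‖ ≤ C * ‖x‖ := by
      intro x
      have := hC (Submodule.inclusion (hle ℓ) x) x.2
      simpa [f] using this
    let F := f.mkContinuous C hfb
    refine ⟨ContinuousLinearMap.adjoint F, fun x y => ?_⟩
    have h := ContinuousLinearMap.adjoint_inner_right F x y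
    have h' : (inner ℂ ((x : H)) (((ContinuousLinearMap.adjoint F) y : E ℓ) : H) : ℂ)
        = inner ℂ ((F x : E ℓ) : H) ((y : H)) := h
    rw [h']
    congr 1
  choose Sl hSl using hSl
  -- key adjoint identity on all of D
  have hkey : ∀ ℓ (y : E ℓ) (d : Dsub),
      (inner ℂ (T d) ((y : H)) : ℂ) = inner ℂ ((d : H)) ((Sl ℓ y : H)) := by
    intro ℓ y d
    haveI : CompleteSpace (E ℓ) := (hclosed ℓ).completeSpace_coe
    set p : E ℓ := (E ℓ).orthogonalProjectionOnto (d : H) with hp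
    have hPmem : (p : H) ∈ Dsub := hle ℓ p.2
    set dP : Dsub := ⟨(p : H), hPmem⟩ with hdP
    set dQ : Dsub := d - dP with hdQ
    have hQperp : ((dQ : H)) ∈ (E ℓ)ᗮ := by
      have h := Submodule.sub_starProjection_mem_orthogonal (K := E ℓ) (d : H)
      have hc : ((dQ : H)) = (d : H) - (p : H) := by
        rw [hdQ]; rfl
      rw [hc, hp]
      exact h
    have hd : d = dP + dQ := by simp [hdQ]
    have h1 : (inner ℂ (T dQ) ((y : H)) : ℂ) = 0 :=
      Submodule.inner_left_of_mem_orthogonal y.2 (hTperp ℓ dQ hQperp)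
    have h2 : (inner ℂ (T dP) ((y : H)) : ℂ) = inner ℂ ((p : H)) ((Sl ℓ y : H)) := by
      have := hSl ℓ p y
      have hval : T (Submodule.inclusion (hle ℓ) p) = T dP := by
        congr 1
      rw [hval] at this
      exact this
    have h3 : (inner ℂ ((dQ : H)) ((Sl ℓ y : H)) : ℂ) = 0 :=
      Submodule.inner_left_of_mem_orthogonal (Sl ℓ y).2 hQperp
    calc (inner ℂ (T d) ((y : H)) : ℂ)
        = inner ℂ (T dP + T dQ) ((y : H)) := by rw [hd, map_add]
      _ = inner ℂ (T dP) ((y : H)) + inner ℂ (T dQ) ((y : H)) := inner_add_left _ _ _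
      _ = inner ℂ ((p : H)) ((Sl ℓ y : H)) := by rw [h1, h2, add_zero]
      _ = inner ℂ ((dP : H)) ((Sl ℓ y : H)) + inner ℂ ((dQ : H)) ((Sl ℓ y : H)) := by
          rw [h3, add_zero]
      _ = inner ℂ (((dP : H) + (dQ : H))) ((Sl ℓ y : H)) := (inner_add_left _ _ _).symm
      _ = inner ℂ ((d : H)) ((Sl ℓ y : H)) := by rw [hd]; norm_num
  -- pointwise definition of S
  have hex : ∀ d : Dsub, ∃ y : H,
      ∀ d' : Dsub, (inner ℂ (T d') ((d : H)) : ℂ) = inner ℂ ((d' : H)) y := by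
    intro d
    obtain ⟨ℓ, hℓ⟩ := (hD (d : H)).1 d.2
    exact ⟨(Sl ℓ ⟨(d : H), hℓ⟩ : H), fun d' => hkey ℓ ⟨(d : H), hℓ⟩ d'⟩
  choose Sf hSf using hex
  have huniq' : ∀ (d : Dsub) (y : H),
      (∀ d' : Dsub, (inner ℂ (T d') ((d : H)) : ℂ) = inner ℂ ((d' : H)) y) → y = Sf d := by
    intro d y hy
    have h0 : ∀ d' : Dsub, (inner ℂ ((d' : H)) (y - Sf d) : ℂ) = 0 := fun d' => by
      rw [inner_sub_right, ← hy d', ← hSf d d', sub_self]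
    exact sub_eq_zero.mp (huniq _ h0)
  -- S as a linear map
  have hadd : ∀ d e : Dsub, Sf (d + e) = Sf d + Sf e := by
    intro d e
    refine (huniq' (d + e) (Sf d + Sf e) fun d' => ?_).symm
    rw [Submodule.coe_add, inner_add_right, inner_add_right, ← hSf d d', ← hSf e d']
  have hsmul : ∀ (c : ℂ) (d : Dsub), Sf (c • d) = c • Sf d := by
    intro c d
    refine (huniq' (c • d) (c • Sf d) fun d' => ?_).symm
    rw [Submodule.coe_smul, inner_smul_right, inner_smul_right, ← hSf d d']
  let S : Dsub →ₗ[ℂ] H :=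
    { toFun := Sf, map_add' := hadd, map_smul' := hsmul }
  have hSeq : ∀ ℓ (hℓ : (d : Dsub) → (d : H) ∈ E ℓ → True), True := fun _ _ => trivial
  have hmemE : ∀ ℓ (d : Dsub) (hd : (d : H) ∈ E ℓ), Sf d = (Sl ℓ ⟨(d : H), hd⟩ : H) := by
    intro ℓ d hd
    exact (huniq' d _ fun d' => hkey ℓ ⟨(d : H), hd⟩ d').symm
  refine ⟨S, ?_, ?_, ?_, ?_, ?_⟩
  · intro d d'
    exact hSf d' d
  · intro d
    obtain ⟨ℓ, hℓ⟩ := (hD (d : H)).1 d.2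
    have := hmemE ℓ d hℓ
    show Sf d ∈ Dsub
    rw [this]
    exact hle ℓ (Sl ℓ ⟨(d : H), hℓ⟩).2
  · intro ℓ d hd
    show Sf d ∈ E ℓ
    rw [hmemE ℓ d hd]
    exact (Sl ℓ ⟨(d : H), hd⟩).2
  · intro ℓ
    refine ⟨‖Sl ℓ‖, (Sl ℓ).opNorm_nonneg, fun d hd => ?_⟩
    show ‖Sf d‖ ≤ _
    rw [hmemE ℓ d hd]
    exact (Sl ℓ).le_opNorm ⟨(d : H), hd⟩
  · intro ℓ d hd
    show Sf d ∈ (E ℓ)ᗮ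
    rw [Submodule.mem_orthogonal]
    intro u hu
    have h := hSf d ⟨u, hle ℓ hu⟩
    rw [← h]
    exact Submodule.inner_right_of_mem_orthogonal (hTinv ℓ ⟨u, hle ℓ hu⟩ hu) hd
end

section
/- Let φ ∈ CPCC_loc(A, C*_E(D)) with Stinespring representation (π_φ, V_φ, {H^φ; E^φ; D^φ}). Define H̃^φ_ℓ := closed linear span of π_φ(A) V_φ H_ℓ, D̃^φ := ⋃_ℓ H̃^φ_ℓ, H̃^φ := closure of D̃^φ, π̃_φ(a) := π_φ(a)|_{D̃^φ}, Ṽ_φ := V_φ. Then (π̃_φ, Ṽ_φ, {H̃^φ; Ẽ^φ; D̃^φ}) is a minimal Stinespring representation of φ: each H̃^φ_ℓ is invariant under π_φ(A), π̃_φ is a unital *-homomorphism into C*_{Ẽ^φ}(D̃^φ), φ(a) ⊆ Ṽ_φ* π̃_φ(a) Ṽ_φ, and H̃^φ = closed linear span of π̃_φ(A) Ṽ_φ D. -/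
/-- The candidate minimal subspaces `H̃φℓ := [πφ(A) Vφ Hℓ]`. -/
noncomputable def minSp {Ω : Type*} {H : Type*} [NormedAddCommGroup H]
    [InnerProductSpace ℂ H] {Hp : Type*} [NormedAddCommGroup Hp]
    [InnerProductSpace ℂ Hp] {A : Type*}
    (E : Ω → Submodule ℂ H) (Dp : Submodule ℂ Hp)
    (π : A → (Dp →ₗ[ℂ] Hp)) (V : H →L[ℂ] Hp) (ℓ : Ω) : Submodule ℂ Hp :=
  (Submodule.span ℂ
    {y : Hp | ∃ (a : A) (h : H), h ∈ E ℓ ∧ ∃ hm : V h ∈ Dp, y = π a ⟨V h, hm⟩}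
  ).topologicalClosure

/-- Any Stinespring representation of `φ ∈ CPCC_loc(A, C*_E(D))` can be cut
down to a minimal one: the subspaces `H̃φℓ = [πφ(A) Vφ Hℓ]` form an upward filtered
family of closed subspaces of the `Hφℓ`, each reducing `πφ(A)`, containing `Vφ(Hℓ)`; the
restricted representation still dilates `φ`, and `H̃φ = [π̃φ(A) Ṽφ D]`. -/
theorem stmt8
    {Ω : Type*} [Preorder Ω] [IsDirected Ω (· ≤ ·)] [Nonempty Ω]
    {H : Type*} [NormedAddCommGroup H] [InnerProductSpace ℂ H] [CompleteSpace H]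
    {Hp : Type*} [NormedAddCommGroup Hp] [InnerProductSpace ℂ Hp] [CompleteSpace Hp]
    {A : Type*} [Ring A] [StarRing A] [Algebra ℂ A]
    (E : Ω → Submodule ℂ H)
    (hEc : ∀ ℓ, IsClosed (E ℓ : Set H)) (hEm : Monotone E)
    (Dsub : Submodule ℂ H)
    (hD : ∀ x : H, x ∈ Dsub ↔ ∃ ℓ, x ∈ E ℓ)
    (hDd : Dense (Dsub : Set H))
    (F : Ω → Submodule ℂ Hp)
    (hFc : ∀ ℓ, IsClosed (F ℓ : Set Hp)) (hFm : Monotone F)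
    (Dp : Submodule ℂ Hp)
    (hDp : ∀ x : Hp, x ∈ Dp ↔ ∃ ℓ, x ∈ F ℓ)
    (hDpd : Dense (Dp : Set Hp))
    (π : A → (Dp →ₗ[ℂ] Hp))
    (hπD : ∀ a (d : Dp), π a d ∈ Dp)
    (hπinv : ∀ a ℓ (d : Dp), (d : Hp) ∈ F ℓ → π a d ∈ F ℓ)
    (hπperp : ∀ a ℓ (d : Dp), (d : Hp) ∈ (F ℓ)ᗮ → π a d ∈ (F ℓ)ᗮ)
    (hπbdd : ∀ a ℓ, ∃ C : ℝ, 0 ≤ C ∧ ∀ d : Dp, (d : Hp) ∈ F ℓ → ‖π a d‖ ≤ C * ‖(d : Hp)‖)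
    (hπ1 : ∀ d : Dp, π 1 d = (d : Hp))
    (hπmul : ∀ a b (d : Dp), π (a * b) d = π a ⟨π b d, hπD b d⟩)
    (hπadd : ∀ a b (d : Dp), π (a + b) d = π a d + π b d)
    (hπstar : ∀ a (d d' : Dp),
      (inner ℂ (π a d) ((d' : Hp)) : ℂ) = inner ℂ ((d : Hp)) (π (star a) d'))
    (V : H →L[ℂ] Hp) (hVc : ‖V‖ ≤ 1)
    (hVE : ∀ ℓ (x : H), x ∈ E ℓ → V x ∈ F ℓ)
    (φ : A → (Dsub →ₗ[ℂ] H))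
    (hVD : ∀ d : Dsub, V (d : H) ∈ Dp)
    (hdil : ∀ a (g h : Dsub),
      (inner ℂ ((g : H)) (φ a h) : ℂ) = inner ℂ (V (g : H)) (π a ⟨V (h : H), hVD h⟩)) :
    -- `Ẽφ` is an upward filtered family of closed subspaces with `H̃φℓ ⊆ Hφℓ`:
    Monotone (minSp E Dp π V) ∧
    (∀ ℓ, minSp E Dp π V ℓ ≤ F ℓ) ∧
    -- each `H̃φℓ` reduces every `πφ(a)`, so `π̃φ(a) := πφ(a)|_{D̃φ}` is well defined:
    (∀ a ℓ (d : Dp), (d : Hp) ∈ minSp E Dp π V ℓ → π a d ∈ minSp E Dp π V ℓ) ∧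
    -- `Ṽφ = Vφ` maps `Hℓ` into `H̃φℓ`:
    (∀ ℓ (h : H), h ∈ E ℓ → V h ∈ minSp E Dp π V ℓ) ∧
    -- the restricted triple still dilates `φ`, i.e. `φ(a) ⊆ Ṽφ* π̃φ(a) Ṽφ`:
    (∀ a (g h : Dsub),
      (inner ℂ ((g : H)) (φ a h) : ℂ) = inner ℂ (V (g : H)) (π a ⟨V (h : H), hVD h⟩)) ∧
    -- minimality: `H̃φ = [π̃φ(A) Ṽφ D]`:
    closure (⋃ ℓ, ((minSp E Dp π V ℓ : Submodule ℂ Hp) : Set Hp))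
      = ((Submodule.span ℂ
          {y : Hp | ∃ (a : A) (h : H), h ∈ Dsub ∧ ∃ hm : V h ∈ Dp, y = π a ⟨V h, hm⟩}
        ).topologicalClosure : Set Hp) := by
  classical
  set S : Ω → Set Hp := fun ℓ =>
    {y : Hp | ∃ (a : A) (h : H), h ∈ E ℓ ∧ ∃ hm : V h ∈ Dp, y = π a ⟨V h, hm⟩} with hSdef
  have hmin : ∀ ℓ, minSp E Dp π V ℓ = (Submodule.span ℂ (S ℓ)).topologicalClosure :=
    fun ℓ => rfl
  have hSm : ∀ {ℓ₁ ℓ₂ : Ω}, ℓ₁ ≤ ℓ₂ → S ℓ₁ ⊆ S ℓ₂ := by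
    intro ℓ₁ ℓ₂ h y hy
    obtain ⟨a, x, hx, hm, rfl⟩ := hy
    exact ⟨a, x, hEm h hx, hm, rfl⟩
  have hmono : Monotone (minSp E Dp π V) := fun ℓ₁ ℓ₂ h =>
    Submodule.topologicalClosure_mono (Submodule.span_mono (hSm h))
  have hspanF : ∀ ℓ, Submodule.span ℂ (S ℓ) ≤ F ℓ := by
    intro ℓ
    rw [Submodule.span_le]
    rintro y ⟨a, x, hx, hm, rfl⟩
    exact hπinv a ℓ ⟨V x, hm⟩ (hVE ℓ x hx)
  have hle : ∀ ℓ, minSp E Dp π V ℓ ≤ F ℓ := fun ℓ =>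
    Submodule.topologicalClosure_minimal _ (hspanF ℓ) (hFc ℓ)
  -- the span of the generators is contained in `Dp` and invariant under each `π a`
  have hspan_inv : ∀ (a : A) (ℓ : Ω), ∀ x ∈ Submodule.span ℂ (S ℓ),
      ∃ hx : x ∈ Dp, π a ⟨x, hx⟩ ∈ Submodule.span ℂ (S ℓ) := by
    intro a ℓ x hx
    induction hx using Submodule.span_induction with
    | mem y hy =>
      obtain ⟨b, h, hh, hm, rfl⟩ := hy
      refine ⟨hπD b ⟨V h, hm⟩, ?_⟩
      have heq : π a ⟨(π b ⟨V h, hm⟩ : Hp), hπD b ⟨V h, hm⟩⟩ = π (a * b) ⟨V h, hm⟩ :=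
        (hπmul a b ⟨V h, hm⟩).symm
      rw [heq]
      exact Submodule.subset_span ⟨a * b, h, hh, hm, rfl⟩
    | zero =>
      refine ⟨Dp.zero_mem, ?_⟩
      rw [show (⟨(0 : Hp), Dp.zero_mem⟩ : Dp) = 0 from rfl, map_zero]
      exact Submodule.zero_mem _
    | add x y hx hy ihx ihy =>
      obtain ⟨hx', hpx⟩ := ihx; obtain ⟨hy', hpy⟩ := ihy
      refine ⟨Dp.add_mem hx' hy', ?_⟩
      rw [show (⟨x + y, Dp.add_mem hx' hy'⟩ : Dp) = ⟨x, hx'⟩ + ⟨y, hy'⟩ from rfl, map_add]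
      exact Submodule.add_mem _ hpx hpy
    | smul c x hx ih =>
      obtain ⟨hx', hp⟩ := ih
      refine ⟨Dp.smul_mem c hx', ?_⟩
      rw [show (⟨c • x, Dp.smul_mem c hx'⟩ : Dp) = c • (⟨x, hx'⟩ : Dp) from rfl, map_smul]
      exact Submodule.smul_mem _ c hp
  have hinv : ∀ (a : A) (ℓ : Ω) (d : Dp),
      (d : Hp) ∈ minSp E Dp π V ℓ → π a d ∈ minSp E Dp π V ℓ := by
    intro a ℓ d hd
    obtain ⟨C, hC0, hC⟩ := hπbdd a ℓ
    have hd' : (d : Hp) ∈ closure ((Submodule.span ℂ (S ℓ) : Submodule ℂ Hp) : Set Hp) := hd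
    obtain ⟨u, huM, hu⟩ := mem_closure_iff_seq_limit.mp hd'
    choose hun hpn using fun n => hspan_inv a ℓ (u n) (huM n)
    set g : ℕ → Hp := fun n => π a ⟨u n, hun n⟩ with hg
    have hdF : (d : Hp) ∈ F ℓ := hle ℓ hd
    have hbound : ∀ n, ‖g n - π a d‖ ≤ C * ‖u n - (d : Hp)‖ := by
      intro n
      have heq : g n - π a d = π a (⟨u n, hun n⟩ - d) := (map_sub (π a) _ _).symm
      rw [heq]
      have hmem : (((⟨u n, hun n⟩ : Dp) - d : Dp) : Hp) ∈ F ℓ := by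
        exact Submodule.sub_mem _ (hspanF ℓ (huM n)) hdF
      simpa using hC ((⟨u n, hun n⟩ : Dp) - d) hmem
    have htend : Filter.Tendsto g Filter.atTop (nhds (π a d)) := by
      rw [tendsto_iff_norm_sub_tendsto_zero]
      have h1 : Filter.Tendsto (fun n => ‖u n - (d : Hp)‖) Filter.atTop (nhds 0) :=
        tendsto_iff_norm_sub_tendsto_zero.mp hu
      have h2 := h1.const_mul C
      rw [mul_zero] at h2
      exact squeeze_zero (fun n => norm_nonneg _) hbound h2
    exact isClosed_closure.mem_of_tendsto htend
      (Filter.Eventually.of_forall fun n => subset_closure (hpn n))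
  have hVmem : ∀ ℓ (h : H), h ∈ E ℓ → V h ∈ minSp E Dp π V ℓ := by
    intro ℓ h hh
    have hm : V h ∈ Dp := (hDp _).mpr ⟨ℓ, hVE ℓ h hh⟩
    have : V h ∈ S ℓ := ⟨1, h, hh, hm, (hπ1 ⟨V h, hm⟩).symm⟩
    exact Submodule.le_topologicalClosure _ (Submodule.subset_span this)
  refine ⟨hmono, hle, hinv, hVmem, hdil, ?_⟩
  -- minimality
  have hdir : Directed (· ≤ ·) (minSp E Dp π V) := hmono.directed_le
  have hsup : ((⨆ ℓ, minSp E Dp π V ℓ : Submodule ℂ Hp) : Set Hp)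
      = ⋃ ℓ, ((minSp E Dp π V ℓ : Submodule ℂ Hp) : Set Hp) :=
    Submodule.coe_iSup_of_directed _ hdir
  have hS' : {y : Hp | ∃ (a : A) (h : H), h ∈ Dsub ∧ ∃ hm : V h ∈ Dp, y = π a ⟨V h, hm⟩}
      = ⋃ ℓ, S ℓ := by
    ext y
    simp only [Set.mem_iUnion, Set.mem_setOf_eq, hSdef]
    constructor
    · rintro ⟨a, h, hh, hm, rfl⟩
      obtain ⟨ℓ, hℓ⟩ := (hD h).mp hh
      exact ⟨ℓ, a, h, hℓ, hm, rfl⟩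
    · rintro ⟨ℓ, a, h, hh, hm, rfl⟩
      exact ⟨a, h, (hD h).mpr ⟨ℓ, hh⟩, hm, rfl⟩
  have key : (⨆ ℓ, minSp E Dp π V ℓ).topologicalClosure
      = (Submodule.span ℂ
          {y : Hp | ∃ (a : A) (h : H), h ∈ Dsub ∧ ∃ hm : V h ∈ Dp, y = π a ⟨V h, hm⟩}
        ).topologicalClosure := by
    rw [hS', Submodule.span_iUnion]
    apply le_antisymm
    · refine Submodule.topologicalClosure_minimal _ (iSup_le fun ℓ => ?_)
        (Submodule.isClosed_topologicalClosure _)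
      exact Submodule.topologicalClosure_minimal _
        ((le_iSup (fun ℓ => Submodule.span ℂ (S ℓ)) ℓ).trans
          (Submodule.le_topologicalClosure _))
        (Submodule.isClosed_topologicalClosure _)
    · exact Submodule.topologicalClosure_mono
        (iSup_le fun ℓ =>
          (Submodule.le_topologicalClosure _).trans (le_iSup (minSp E Dp π V) ℓ))
  calc closure (⋃ ℓ, ((minSp E Dp π V ℓ : Submodule ℂ Hp) : Set Hp))
      = closure ((⨆ ℓ, minSp E Dp π V ℓ : Submodule ℂ Hp) : Set Hp) := by rw [hsup]
    _ = (((⨆ ℓ, minSp E Dp π V ℓ).topologicalClosure : Submodule ℂ Hp) : Set Hp) :=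
        (Submodule.topologicalClosure_coe _).symm
    _ = _ := by rw [key]
end

section
/- Any two minimal Stinespring representations (π̃_φ, Ṽ_φ, {H̃^φ; Ẽ^φ; D̃^φ}) and (π̂_φ, V̂_φ, {Ĥ^φ; Ê^φ; D̂^φ}) of the same map φ ∈ CPCC_loc(A, C*_E(D)) are unitarily equivalent: there exists a unitary U : H̃^φ → Ĥ^φ such that U Ṽ_φ = V̂_φ and U π̃_φ(a) = π̂_φ(a) U for all a ∈ A. -/
/-- Any two minimal Stinespring representations of the same map
`φ ∈ CPCC_loc(A, C*_E(D))` are unitarily equivalent: there is a unitary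
`U : H̃φ → Ĥφ` with `U Ṽφ = V̂φ` and `U π̃φ(a) = π̂φ(a) U` for all `a`. -/
theorem stmt9
    {Ω : Type*} [Preorder Ω] [IsDirected Ω (· ≤ ·)] [Nonempty Ω]
    {H : Type*} [NormedAddCommGroup H] [InnerProductSpace ℂ H] [CompleteSpace H]
    {H1 : Type*} [NormedAddCommGroup H1] [InnerProductSpace ℂ H1] [CompleteSpace H1]
    {H2 : Type*} [NormedAddCommGroup H2] [InnerProductSpace ℂ H2] [CompleteSpace H2]
    {A : Type*} [Ring A] [StarRing A] [Algebra ℂ A]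
    (E : Ω → Submodule ℂ H)
    (hEc : ∀ ℓ, IsClosed (E ℓ : Set H)) (hEm : Monotone E)
    (Dsub : Submodule ℂ H)
    (hD : ∀ x : H, x ∈ Dsub ↔ ∃ ℓ, x ∈ E ℓ)
    (hDd : Dense (Dsub : Set H))
    (φ : A → (Dsub →ₗ[ℂ] H))
    -- the first minimal Stinespring representation:
    (F1 : Ω → Submodule ℂ H1)
    (hF1c : ∀ ℓ, IsClosed (F1 ℓ : Set H1)) (hF1m : Monotone F1)
    (D1 : Submodule ℂ H1)
    (hD1 : ∀ x : H1, x ∈ D1 ↔ ∃ ℓ, x ∈ F1 ℓ)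
    (hD1d : Dense (D1 : Set H1))
    (π1 : A → (D1 →ₗ[ℂ] H1))
    (hπ1D : ∀ a (d : D1), π1 a d ∈ D1)
    (hπ1inv : ∀ a ℓ (d : D1), (d : H1) ∈ F1 ℓ → π1 a d ∈ F1 ℓ)
    (hπ1perp : ∀ a ℓ (d : D1), (d : H1) ∈ (F1 ℓ)ᗮ → π1 a d ∈ (F1 ℓ)ᗮ)
    (hπ1bdd : ∀ a ℓ, ∃ C : ℝ, 0 ≤ C ∧ ∀ d : D1, (d : H1) ∈ F1 ℓ → ‖π1 a d‖ ≤ C * ‖(d : H1)‖)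
    (hπ1one : ∀ d : D1, π1 1 d = (d : H1))
    (hπ1mul : ∀ a b (d : D1), π1 (a * b) d = π1 a ⟨π1 b d, hπ1D b d⟩)
    (hπ1add : ∀ a b (d : D1), π1 (a + b) d = π1 a d + π1 b d)
    (hπ1star : ∀ a (d d' : D1),
      (inner ℂ (π1 a d) ((d' : H1)) : ℂ) = inner ℂ ((d : H1)) (π1 (star a) d'))
    (V1 : H →L[ℂ] H1) (hV1c : ‖V1‖ ≤ 1)
    (hV1E : ∀ ℓ (x : H), x ∈ E ℓ → V1 x ∈ F1 ℓ)
    (hV1D : ∀ d : Dsub, V1 (d : H) ∈ D1)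
    (hdil1 : ∀ a (g h : Dsub),
      (inner ℂ ((g : H)) (φ a h) : ℂ) = inner ℂ (V1 (g : H)) (π1 a ⟨V1 (h : H), hV1D h⟩))
    (hmin1 : ∀ ℓ, F1 ℓ = minSp E D1 π1 V1 ℓ)
    -- the second minimal Stinespring representation:
    (F2 : Ω → Submodule ℂ H2)
    (hF2c : ∀ ℓ, IsClosed (F2 ℓ : Set H2)) (hF2m : Monotone F2)
    (D2 : Submodule ℂ H2)
    (hD2 : ∀ x : H2, x ∈ D2 ↔ ∃ ℓ, x ∈ F2 ℓ)
    (hD2d : Dense (D2 : Set H2))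
    (π2 : A → (D2 →ₗ[ℂ] H2))
    (hπ2D : ∀ a (d : D2), π2 a d ∈ D2)
    (hπ2inv : ∀ a ℓ (d : D2), (d : H2) ∈ F2 ℓ → π2 a d ∈ F2 ℓ)
    (hπ2perp : ∀ a ℓ (d : D2), (d : H2) ∈ (F2 ℓ)ᗮ → π2 a d ∈ (F2 ℓ)ᗮ)
    (hπ2bdd : ∀ a ℓ, ∃ C : ℝ, 0 ≤ C ∧ ∀ d : D2, (d : H2) ∈ F2 ℓ → ‖π2 a d‖ ≤ C * ‖(d : H2)‖)
    (hπ2one : ∀ d : D2, π2 1 d = (d : H2))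
    (hπ2mul : ∀ a b (d : D2), π2 (a * b) d = π2 a ⟨π2 b d, hπ2D b d⟩)
    (hπ2add : ∀ a b (d : D2), π2 (a + b) d = π2 a d + π2 b d)
    (hπ2star : ∀ a (d d' : D2),
      (inner ℂ (π2 a d) ((d' : H2)) : ℂ) = inner ℂ ((d : H2)) (π2 (star a) d'))
    (V2 : H →L[ℂ] H2) (hV2c : ‖V2‖ ≤ 1)
    (hV2E : ∀ ℓ (x : H), x ∈ E ℓ → V2 x ∈ F2 ℓ)
    (hV2D : ∀ d : Dsub, V2 (d : H) ∈ D2)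
    (hdil2 : ∀ a (g h : Dsub),
      (inner ℂ ((g : H)) (φ a h) : ℂ) = inner ℂ (V2 (g : H)) (π2 a ⟨V2 (h : H), hV2D h⟩))
    (hmin2 : ∀ ℓ, F2 ℓ = minSp E D2 π2 V2 ℓ) :
    ∃ U : H1 ≃ₗᵢ[ℂ] H2,
      (∀ x : H, U (V1 x) = V2 x) ∧
      (∀ a (d : D1) (d' : D2), (d' : H2) = U ((d : H1)) → U (π1 a d) = π2 a d') := by
  classical
  -- generator functions
  set g1 : A × Dsub → H1 := fun p => π1 p.1 ⟨V1 (p.2 : H), hV1D p.2⟩ with hg1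
  set g2 : A × Dsub → H2 := fun p => π2 p.1 ⟨V2 (p.2 : H), hV2D p.2⟩ with hg2
  set T1 : ((A × Dsub) →₀ ℂ) →ₗ[ℂ] H1 := Finsupp.linearCombination ℂ g1 with hT1
  set T2 : ((A × Dsub) →₀ ℂ) →ₗ[ℂ] H2 := Finsupp.linearCombination ℂ g2 with hT2
  -- generator inner product identity
  have hgen : ∀ p q : A × Dsub, (inner ℂ (g1 p) (g1 q) : ℂ) = inner ℂ (g2 p) (g2 q) := by
    rintro ⟨a, g⟩ ⟨b, h⟩
    have e1 : (inner ℂ (g1 (a, g)) (g1 (b, h)) : ℂ)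
        = inner ℂ ((g : H)) (φ (star a * b) h) := by
      have h1 := hπ1star a ⟨V1 (g : H), hV1D g⟩ ⟨π1 b ⟨V1 (h : H), hV1D h⟩, hπ1D b _⟩
      have h2 := hπ1mul (star a) b ⟨V1 (h : H), hV1D h⟩
      have h3 := hdil1 (star a * b) g h
      simp only [hg1]
      rw [h1, ← h2, ← h3]
    have e2 : (inner ℂ (g2 (a, g)) (g2 (b, h)) : ℂ)
        = inner ℂ ((g : H)) (φ (star a * b) h) := by
      have h1 := hπ2star a ⟨V2 (g : H), hV2D g⟩ ⟨π2 b ⟨V2 (h : H), hV2D h⟩, hπ2D b _⟩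
      have h2 := hπ2mul (star a) b ⟨V2 (h : H), hV2D h⟩
      have h3 := hdil2 (star a * b) g h
      simp only [hg2]
      rw [h1, ← h2, ← h3]
    rw [e1, e2]
  -- inner products are preserved
  have hinner : ∀ m m' : (A × Dsub) →₀ ℂ,
      (inner ℂ (T1 m) (T1 m') : ℂ) = inner ℂ (T2 m) (T2 m') := by
    have step : ∀ p : A × Dsub, ∀ m', (inner ℂ (g1 p) (T1 m') : ℂ) = inner ℂ (g2 p) (T2 m') := by
      intro p m'
      induction m' using Finsupp.induction_linear with
      | zero => simp
      | add f g hf hg => simp only [map_add, inner_add_right, hf, hg]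
      | single q c =>
          simp only [hT1, hT2, Finsupp.linearCombination_single, inner_smul_right, hgen p q]
    intro m m'
    induction m using Finsupp.induction_linear with
    | zero => simp
    | add f g hf hg => simp only [map_add, inner_add_left, hf, hg]
    | single p c =>
        simp only [hT1, hT2, Finsupp.linearCombination_single, inner_smul_left, step p m']
        rw [← hT1, ← hT2, step p m']
  have hnorm : ∀ m, ‖T1 m‖ = ‖T2 m‖ := by
    intro m
    rw [@norm_eq_sqrt_re_inner ℂ, @norm_eq_sqrt_re_inner ℂ, hinner m m]
  -- kernel inclusion and the induced map on the range
  have hker : LinearMap.ker T1 ≤ LinearMap.ker T2 := by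
    intro m hm
    rw [LinearMap.mem_ker] at hm ⊢
    have := hnorm m
    rw [hm, norm_zero] at this
    exact norm_eq_zero.mp this.symm
  set f0 : LinearMap.range T1 →ₗ[ℂ] H2 :=
    ((LinearMap.ker T1).liftQ T2 hker).comp
      (LinearMap.quotKerEquivRange T1).symm.toLinearMap with hf0def
  have hf0 : ∀ m : (A × Dsub) →₀ ℂ,
      f0 ⟨T1 m, LinearMap.mem_range_self _ m⟩ = T2 m := by
    intro m
    have h1 : (LinearMap.quotKerEquivRange T1).symm ⟨T1 m, LinearMap.mem_range_self _ m⟩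
        = Submodule.Quotient.mk m := by
      rw [LinearEquiv.symm_apply_eq]
      exact Subtype.ext (LinearMap.quotKerEquivRange_apply_mk T1 m)
    simp only [hf0def, LinearMap.comp_apply, LinearEquiv.coe_toLinearMap, h1,
      Submodule.liftQ_apply]
  have hf0norm : ∀ x : LinearMap.range T1, ‖f0 x‖ = ‖x‖ := by
    rintro ⟨x, hx⟩
    obtain ⟨m, rfl⟩ := hx
    rw [hf0 m]
    exact (hnorm m).symm
  set f1 : LinearMap.range T1 →ₗᵢ[ℂ] H2 := ⟨f0, hf0norm⟩ with hf1def
  -- dense ranges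
  have hspan1 : ∀ ℓ, (Submodule.span ℂ
      {y : H1 | ∃ (a : A) (h : H), h ∈ E ℓ ∧ ∃ hm : V1 h ∈ D1, y = π1 a ⟨V1 h, hm⟩})
      ≤ LinearMap.range T1 := by
    intro ℓ
    rw [Submodule.span_le]
    rintro y ⟨a, h, hE, hm, rfl⟩
    refine ⟨Finsupp.single (a, ⟨h, (hD h).2 ⟨ℓ, hE⟩⟩) 1, ?_⟩
    simp only [hT1, Finsupp.linearCombination_single, one_smul, hg1]
  have hspan2 : ∀ ℓ, (Submodule.span ℂ
      {y : H2 | ∃ (a : A) (h : H), h ∈ E ℓ ∧ ∃ hm : V2 h ∈ D2, y = π2 a ⟨V2 h, hm⟩})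
      ≤ LinearMap.range T2 := by
    intro ℓ
    rw [Submodule.span_le]
    rintro y ⟨a, h, hE, hm, rfl⟩
    refine ⟨Finsupp.single (a, ⟨h, (hD h).2 ⟨ℓ, hE⟩⟩) 1, ?_⟩
    simp only [hT2, Finsupp.linearCombination_single, one_smul, hg2]
  have hdense1 : Dense ((LinearMap.range T1 : Submodule ℂ H1) : Set H1) := by
    have hF : ∀ ℓ, (F1 ℓ : Set H1) ⊆ closure ((LinearMap.range T1 : Submodule ℂ H1) : Set H1) := by
      intro ℓ
      rw [hmin1 ℓ]
      show ((minSp E D1 π1 V1 ℓ : Submodule ℂ H1) : Set H1) ⊆ _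
      unfold minSp
      rw [Submodule.topologicalClosure_coe]
      exact closure_mono (SetLike.coe_subset_coe.mpr (hspan1 ℓ))
    have hDsub : (D1 : Set H1) ⊆ closure ((LinearMap.range T1 : Submodule ℂ H1) : Set H1) := by
      intro x hx
      obtain ⟨ℓ, hℓ⟩ := (hD1 x).1 hx
      exact hF ℓ hℓ
    intro x
    have := hD1d x
    have h2 : closure (D1 : Set H1) ⊆
        closure ((LinearMap.range T1 : Submodule ℂ H1) : Set H1) := by
      rw [← closure_closure (s := ((LinearMap.range T1 : Submodule ℂ H1) : Set H1))]
      exact closure_mono hDsub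
    exact h2 this
  have hdense2 : Dense ((LinearMap.range T2 : Submodule ℂ H2) : Set H2) := by
    have hF : ∀ ℓ, (F2 ℓ : Set H2) ⊆ closure ((LinearMap.range T2 : Submodule ℂ H2) : Set H2) := by
      intro ℓ
      rw [hmin2 ℓ]
      show ((minSp E D2 π2 V2 ℓ : Submodule ℂ H2) : Set H2) ⊆ _
      unfold minSp
      rw [Submodule.topologicalClosure_coe]
      exact closure_mono (SetLike.coe_subset_coe.mpr (hspan2 ℓ))
    have hDsub : (D2 : Set H2) ⊆ closure ((LinearMap.range T2 : Submodule ℂ H2) : Set H2) := by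
      intro x hx
      obtain ⟨ℓ, hℓ⟩ := (hD2 x).1 hx
      exact hF ℓ hℓ
    intro x
    have := hD2d x
    have h2 : closure (D2 : Set H2) ⊆
        closure ((LinearMap.range T2 : Submodule ℂ H2) : Set H2) := by
      rw [← closure_closure (s := ((LinearMap.range T2 : Submodule ℂ H2) : Set H2))]
      exact closure_mono hDsub
    exact h2 this
  -- extension to all of H1
  set e : (LinearMap.range T1 : Submodule ℂ H1) →L[ℂ] H1 := (LinearMap.range T1).subtypeL
    with hedef
  have hde : DenseRange e := by
    have : Set.range e = ((LinearMap.range T1 : Submodule ℂ H1) : Set H1) := Subtype.range_coe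
    rw [DenseRange, this]
    exact hdense1
  have hue : IsUniformInducing e := isometry_subtype_coe.isUniformInducing
  set U0 : H1 →L[ℂ] H2 := f1.toContinuousLinearMap.extend e with hU0def
  have hU0 : ∀ x : (LinearMap.range T1 : Submodule ℂ H1), U0 (x : H1) = f0 x := by
    intro x
    exact ContinuousLinearMap.extend_eq (f := f1.toContinuousLinearMap) (e := e) hde hue x
  have hU0T : ∀ m, U0 (T1 m) = T2 m := by
    intro m
    have := hU0 ⟨T1 m, LinearMap.mem_range_self _ m⟩
    rw [this, hf0 m]
  -- U0 is an isometry
  have hU0norm : ∀ x : H1, ‖U0 x‖ = ‖x‖ := by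
    have hcl : IsClosed {x : H1 | ‖U0 x‖ = ‖x‖} :=
      isClosed_eq (U0.continuous.norm) continuous_norm
    have hsub : ((LinearMap.range T1 : Submodule ℂ H1) : Set H1) ⊆ {x : H1 | ‖U0 x‖ = ‖x‖} := by
      rintro x hx
      have := hU0 ⟨x, hx⟩
      simp only [Set.mem_setOf_eq, this]
      exact hf0norm ⟨x, hx⟩
    intro x
    have : (Set.univ : Set H1) ⊆ {x : H1 | ‖U0 x‖ = ‖x‖} := by
      rw [← hdense1.closure_eq]
      exact hcl.closure_subset_iff.mpr hsub
    exact this (Set.mem_univ x)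
  set U1 : H1 →ₗᵢ[ℂ] H2 := ⟨U0.toLinearMap, hU0norm⟩ with hU1def
  have hU1surj : Function.Surjective U1 := by
    have hclosed : IsClosed (Set.range U1) := U1.isometry.isClosedEmbedding.isClosed_range
    have hsub : ((LinearMap.range T2 : Submodule ℂ H2) : Set H2) ⊆ Set.range U1 := by
      rintro y ⟨m, rfl⟩
      exact ⟨T1 m, hU0T m⟩
    have : (Set.univ : Set H2) ⊆ Set.range U1 := by
      rw [← hdense2.closure_eq] at *
      calc closure ((LinearMap.range T2 : Submodule ℂ H2) : Set H2)
          ⊆ closure (Set.range U1) := closure_mono hsub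
        _ = Set.range U1 := hclosed.closure_eq
    intro y
    exact this (Set.mem_univ y)
  set U : H1 ≃ₗᵢ[ℂ] H2 := LinearIsometryEquiv.ofSurjective U1 hU1surj with hUdef
  have hUapp : ∀ x : H1, U x = U0 x := fun x => rfl
  -- first property
  have hUV : ∀ x : H, U (V1 x) = V2 x := by
    have hd : ∀ x : Dsub, U0 (V1 (x : H)) = V2 (x : H) := by
      intro x
      have h1 : T1 (Finsupp.single ((1 : A), x) 1) = V1 (x : H) := by
        simp only [hT1, Finsupp.linearCombination_single, one_smul, hg1]
        exact hπ1one ⟨V1 (x : H), hV1D x⟩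
      have h2 : T2 (Finsupp.single ((1 : A), x) 1) = V2 (x : H) := by
        simp only [hT2, Finsupp.linearCombination_single, one_smul, hg2]
        exact hπ2one ⟨V2 (x : H), hV2D x⟩
      rw [← h1, hU0T, h2]
    have heq : (fun x : H => U0 (V1 x)) = fun x : H => V2 x := by
      refine Continuous.ext_on hDd (U0.continuous.comp V1.continuous) V2.continuous ?_
      rintro x hx
      exact hd ⟨x, hx⟩
    intro x
    rw [hUapp]
    exact congrFun heq x
  refine ⟨U, hUV, ?_⟩
  -- second property
  intro a d d' hd'
  obtain ⟨ℓ, hℓ⟩ := (hD1 (d : H1)).1 d.2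
  -- the two spanning sets at level ℓ
  set S1 : Set H1 :=
    {y : H1 | ∃ (a : A) (h : H), h ∈ E ℓ ∧ ∃ hm : V1 h ∈ D1, y = π1 a ⟨V1 h, hm⟩} with hS1def
  set S2 : Set H2 :=
    {y : H2 | ∃ (a : A) (h : H), h ∈ E ℓ ∧ ∃ hm : V2 h ∈ D2, y = π2 a ⟨V2 h, hm⟩} with hS2def
  have hS2D2 : Submodule.span ℂ S2 ≤ D2 := by
    rw [Submodule.span_le]
    rintro y ⟨b, h, hE, hm, rfl⟩
    exact hπ2D b _
  have hS1D1 : Submodule.span ℂ S1 ≤ D1 := by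
    rw [Submodule.span_le]
    rintro y ⟨b, h, hE, hm, rfl⟩
    exact hπ1D b _
  have hS1F1 : Submodule.span ℂ S1 ≤ F1 ℓ := by
    rw [hmin1 ℓ]
    exact Submodule.le_topologicalClosure _
  have hS2F2 : Submodule.span ℂ S2 ≤ F2 ℓ := by
    rw [hmin2 ℓ]
    exact Submodule.le_topologicalClosure _
  -- key algebraic identity on span S1
  have hkey : ∀ x ∈ Submodule.span ℂ S1, ∃ (h1 : x ∈ D1) (h2 : U0 x ∈ D2),
      U0 x ∈ Submodule.span ℂ S2 ∧ U0 (π1 a ⟨x, h1⟩) = π2 a ⟨U0 x, h2⟩ := by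
    intro x hx
    induction hx using Submodule.span_induction with
    | mem y hy =>
        obtain ⟨b, h, hE, hm, rfl⟩ := hy
        have hhD : h ∈ Dsub := (hD h).2 ⟨ℓ, hE⟩
        have hx1 : π1 b ⟨V1 h, hm⟩ = T1 (Finsupp.single (b, ⟨h, hhD⟩) 1) := by
          simp only [hT1, Finsupp.linearCombination_single, one_smul, hg1]
        have hUx : U0 (π1 b ⟨V1 h, hm⟩) = π2 b ⟨V2 h, hV2D ⟨h, hhD⟩⟩ := by
          rw [hx1, hU0T]
          simp only [hT2, Finsupp.linearCombination_single, one_smul, hg2]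
        have h1 : π1 b ⟨V1 h, hm⟩ ∈ D1 := hπ1D b _
        have h2' : π2 b ⟨V2 h, hV2D ⟨h, hhD⟩⟩ ∈ D2 := hπ2D b _
        have h2 : U0 (π1 b ⟨V1 h, hm⟩) ∈ D2 := by rw [hUx]; exact h2'
        refine ⟨h1, h2, ?_, ?_⟩
        · rw [hUx]
          exact Submodule.subset_span ⟨b, h, hE, hV2D ⟨h, hhD⟩, rfl⟩
        · have hmul1 : π1 a ⟨π1 b ⟨V1 h, hm⟩, h1⟩ = π1 (a * b) ⟨V1 h, hV1D ⟨h, hhD⟩⟩ := by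
            rw [hπ1mul a b ⟨V1 h, hV1D ⟨h, hhD⟩⟩]
          have hmul2 : π2 a ⟨π2 b ⟨V2 h, hV2D ⟨h, hhD⟩⟩, h2'⟩
              = π2 (a * b) ⟨V2 h, hV2D ⟨h, hhD⟩⟩ := by
            rw [hπ2mul a b ⟨V2 h, hV2D ⟨h, hhD⟩⟩]
          have hx2 : π1 (a * b) ⟨V1 h, hV1D ⟨h, hhD⟩⟩
              = T1 (Finsupp.single (a * b, ⟨h, hhD⟩) 1) := by
            simp only [hT1, Finsupp.linearCombination_single, one_smul, hg1]
          have : U0 (π1 a ⟨π1 b ⟨V1 h, hm⟩, h1⟩) = π2 (a * b) ⟨V2 h, hV2D ⟨h, hhD⟩⟩ := by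
            rw [hmul1, hx2, hU0T]
            simp only [hT2, Finsupp.linearCombination_single, one_smul, hg2]
          rw [this, ← hmul2]
          congr 1
          exact Subtype.ext hUx.symm
    | zero =>
        have h2 : U0 (0 : H1) ∈ D2 := by rw [map_zero]; exact D2.zero_mem
        refine ⟨D1.zero_mem, h2, by rw [map_zero]; exact Submodule.zero_mem _, ?_⟩
        have e1 : U0 (π1 a (⟨(0 : H1), D1.zero_mem⟩ : D1)) = 0 := by
          have h0 : (⟨(0 : H1), D1.zero_mem⟩ : D1) = 0 := Subtype.ext rfl
          rw [h0, map_zero, map_zero]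
        have e2 : π2 a (⟨U0 (0 : H1), h2⟩ : D2) = 0 := by
          have h0 : (⟨U0 (0 : H1), h2⟩ : D2) = 0 := Subtype.ext (by simp)
          rw [h0, map_zero]
        exact e1.trans e2.symm
    | add y z hy hz ihy ihz =>
        obtain ⟨hy1, hy2, hy3, hy4⟩ := ihy
        obtain ⟨hz1, hz2, hz3, hz4⟩ := ihz
        have h1 : y + z ∈ D1 := D1.add_mem hy1 hz1
        have h2 : U0 (y + z) ∈ D2 := by rw [map_add]; exact D2.add_mem hy2 hz2
        refine ⟨h1, h2, by rw [map_add]; exact Submodule.add_mem _ hy3 hz3, ?_⟩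
        have e1 : (⟨y + z, h1⟩ : D1) = ⟨y, hy1⟩ + ⟨z, hz1⟩ := rfl
        have e2 : (⟨U0 (y + z), h2⟩ : D2) = ⟨U0 y, hy2⟩ + ⟨U0 z, hz2⟩ := by
          ext; simp [map_add]
        rw [e1, map_add, map_add, hy4, hz4, e2, map_add]
    | smul c y hy ihy =>
        obtain ⟨hy1, hy2, hy3, hy4⟩ := ihy
        have h1 : c • y ∈ D1 := D1.smul_mem c hy1
        have h2 : U0 (c • y) ∈ D2 := by rw [map_smul]; exact D2.smul_mem c hy2
        refine ⟨h1, h2, by rw [map_smul]; exact Submodule.smul_mem _ c hy3, ?_⟩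
        have e1 : (⟨c • y, h1⟩ : D1) = c • ⟨y, hy1⟩ := rfl
        have e2 : (⟨U0 (c • y), h2⟩ : D2) = c • ⟨U0 y, hy2⟩ := by
          ext; simp [map_smul]
        rw [e1, map_smul, map_smul, hy4, e2, map_smul]
  -- approximating sequence
  have hdℓ : (d : H1) ∈ closure ((Submodule.span ℂ S1 : Submodule ℂ H1) : Set H1) := by
    have := hℓ
    rw [hmin1 ℓ] at this
    exact this
  obtain ⟨x, hxmem, hxlim⟩ := mem_closure_iff_seq_limit.mp hdℓ
  -- bounds
  obtain ⟨C1, hC1pos, hC1⟩ := hπ1bdd a ℓ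
  obtain ⟨C2, hC2pos, hC2⟩ := hπ2bdd a ℓ
  -- memberships for each n
  choose h1 h2 hsp2 heqn using fun n => hkey (x n) (hxmem n)
  -- π1 a ⟨x n⟩ → π1 a d
  have hdF1 : (d : H1) ∈ F1 ℓ := hℓ
  have hxF1 : ∀ n, x n ∈ F1 ℓ := fun n => hS1F1 (hxmem n)
  have hlim1 : Filter.Tendsto (fun n => π1 a ⟨x n, h1 n⟩) Filter.atTop (nhds (π1 a d)) := by
    rw [tendsto_iff_norm_sub_tendsto_zero]
    have hb : ∀ n, ‖π1 a ⟨x n, h1 n⟩ - π1 a d‖ ≤ C1 * ‖x n - (d : H1)‖ := by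
      intro n
      have : π1 a ⟨x n, h1 n⟩ - π1 a d = π1 a (⟨x n, h1 n⟩ - d) := by rw [map_sub]
      rw [this]
      have hmem : ((⟨x n, h1 n⟩ - d : D1) : H1) ∈ F1 ℓ := by
        have : ((⟨x n, h1 n⟩ - d : D1) : H1) = x n - (d : H1) := rfl
        rw [this]
        exact Submodule.sub_mem _ (hxF1 n) hdF1
      have := hC1 (⟨x n, h1 n⟩ - d) hmem
      simpa using this
    have h0 : Filter.Tendsto (fun n => C1 * ‖x n - (d : H1)‖) Filter.atTop (nhds 0) := by
      have := (tendsto_iff_norm_sub_tendsto_zero.mp hxlim)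
      simpa using this.const_mul C1
    exact squeeze_zero (fun n => norm_nonneg _) hb h0
  -- U0 (x n) → (d' : H2) and memberships
  have hUxlim : Filter.Tendsto (fun n => U0 (x n)) Filter.atTop (nhds ((d' : H2))) := by
    have : Filter.Tendsto (fun n => U0 (x n)) Filter.atTop (nhds (U0 (d : H1))) :=
      (U0.continuous.tendsto _).comp hxlim
    rwa [← hUapp, ← hd'] at this
  have hd'F2 : (d' : H2) ∈ F2 ℓ := by
    have hcl : IsClosed ((F2 ℓ : Set H2)) := hF2c ℓ
    have : ∀ n, U0 (x n) ∈ (F2 ℓ : Set H2) := fun n => hS2F2 (hsp2 n)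
    exact hcl.mem_of_tendsto hUxlim (Filter.Eventually.of_forall this)
  have hlim2 : Filter.Tendsto (fun n => π2 a ⟨U0 (x n), h2 n⟩) Filter.atTop
      (nhds (π2 a d')) := by
    rw [tendsto_iff_norm_sub_tendsto_zero]
    have hb : ∀ n, ‖π2 a ⟨U0 (x n), h2 n⟩ - π2 a d'‖ ≤ C2 * ‖U0 (x n) - (d' : H2)‖ := by
      intro n
      have : π2 a ⟨U0 (x n), h2 n⟩ - π2 a d' = π2 a (⟨U0 (x n), h2 n⟩ - d') := by rw [map_sub]
      rw [this]
      have hmem : ((⟨U0 (x n), h2 n⟩ - d' : D2) : H2) ∈ F2 ℓ := by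
        have : ((⟨U0 (x n), h2 n⟩ - d' : D2) : H2) = U0 (x n) - (d' : H2) := rfl
        rw [this]
        exact Submodule.sub_mem _ (hS2F2 (hsp2 n)) hd'F2
      have := hC2 (⟨U0 (x n), h2 n⟩ - d') hmem
      simpa using this
    have h0 : Filter.Tendsto (fun n => C2 * ‖U0 (x n) - (d' : H2)‖) Filter.atTop (nhds 0) := by
      have := (tendsto_iff_norm_sub_tendsto_zero.mp hUxlim)
      simpa using this.const_mul C2
    exact squeeze_zero (fun n => norm_nonneg _) hb h0
  -- combine
  have hlim1' : Filter.Tendsto (fun n => U0 (π1 a ⟨x n, h1 n⟩)) Filter.atTop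
      (nhds (U0 (π1 a d))) := (U0.continuous.tendsto _).comp hlim1
  have heq' : (fun n => U0 (π1 a ⟨x n, h1 n⟩)) = fun n => π2 a ⟨U0 (x n), h2 n⟩ := by
    funext n; exact heqn n
  rw [heq'] at hlim1'
  rw [hUapp]
  exact tendsto_nhds_unique hlim1' hlim2
end

section
/- Let (π_φ, V_φ, {H^φ; E^φ; D^φ}) be a minimal Stinespring representation of φ, and T ∈ π_φ(A)' ∩ C*_{E^φ}(D^φ). If V_φ* T π_φ(a) V_φ|_D = 0 for all a ∈ A, then T = 0. -/
open scoped ComplexOrder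

/-- Local (α-)positivity of a matrix over a locally C*-algebra: `M = B*B + Y` with
`p α (Y i j) = 0`. -/
def MatLocPos {Λ A : Type*} [Ring A] [StarRing A]
    (p : Λ → A → ℝ) (α : Λ) {n : ℕ} (M : Matrix (Fin n) (Fin n) A) : Prop :=
  ∃ B Y : Matrix (Fin n) (Fin n) A, M = star B * B + Y ∧ ∀ i j, p α (Y i j) = 0

/-- `ψ : A → C*_E(D)` is a (linear) local completely positive and local completely
contractive map. -/
def LocCPCC {Λ Ω A H : Type*} [Ring A] [StarRing A] [Algebra ℂ A]
    [NormedAddCommGroup H] [InnerProductSpace ℂ H]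
    (p : Λ → A → ℝ) (E : Ω → Submodule ℂ H) (Dsub : Submodule ℂ H)
    (ψ : A → (Dsub →ₗ[ℂ] H)) : Prop :=
  -- linearity
  (∀ a b : A, ψ (a + b) = ψ a + ψ b) ∧
  (∀ (c : ℂ) (a : A), ψ (c • a) = c • ψ a) ∧
  -- values in `C*_E(D)`
  (∀ (a : A) (ℓ : Ω) (d : Dsub), (d : H) ∈ E ℓ → ψ a d ∈ E ℓ) ∧
  (∀ (a : A) (ℓ : Ω) (d : Dsub), (d : H) ∈ (E ℓ)ᗮ → ψ a d ∈ (E ℓ)ᗮ) ∧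
  -- local complete positivity
  (∀ ℓ : Ω, ∃ α : Λ, ∀ (n : ℕ) (M : Matrix (Fin n) (Fin n) A), MatLocPos p α M →
    ∀ v : Fin n → Dsub, (∀ i, ((v i : H)) ∈ E ℓ) →
      0 ≤ ∑ i, ∑ j, (inner ℂ ((v i : H)) (ψ (M i j) (v j)) : ℂ)) ∧
  -- local complete contractivity
  (∀ ℓ : Ω, ∃ α : Λ, ∀ (n : ℕ) (M : Matrix (Fin n) (Fin n) A) (C : ℝ), 0 ≤ C →
    MatLocPos p α (((C : ℂ) ^ 2) • (1 : Matrix (Fin n) (Fin n) A) - star M * M) →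
    ∀ v : Fin n → Dsub, (∀ i, ((v i : H)) ∈ E ℓ) →
      ∑ i, ‖∑ j, ψ (M i j) (v j)‖ ^ 2 ≤ C ^ 2 * ∑ j, ‖((v j : H))‖ ^ 2)

/-- For a minimal Stinespring representation of `φ` and
`T ∈ πφ(A)' ∩ C*_{Eφ}(Dφ)`, if `Vφ* T πφ(a) Vφ|_D = 0` for all `a ∈ A`, then `T = 0`. -/
theorem stmt12
    {Ω : Type*} [Preorder Ω] [IsDirected Ω (· ≤ ·)] [Nonempty Ω]
    {Λ : Type*} [Preorder Λ] [IsDirected Λ (· ≤ ·)]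
    {H : Type*} [NormedAddCommGroup H] [InnerProductSpace ℂ H] [CompleteSpace H]
    {Hp : Type*} [NormedAddCommGroup Hp] [InnerProductSpace ℂ Hp] [CompleteSpace Hp]
    {A : Type*} [Ring A] [StarRing A] [Algebra ℂ A]
    (p : Λ → A → ℝ)
    (E : Ω → Submodule ℂ H)
    (hEc : ∀ ℓ, IsClosed (E ℓ : Set H)) (hEm : Monotone E)
    (Dsub : Submodule ℂ H)
    (hD : ∀ x : H, x ∈ Dsub ↔ ∃ ℓ, x ∈ E ℓ)
    (hDd : Dense (Dsub : Set H))
    (F : Ω → Submodule ℂ Hp)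
    (hFc : ∀ ℓ, IsClosed (F ℓ : Set Hp)) (hFm : Monotone F)
    (Dp : Submodule ℂ Hp)
    (hDp : ∀ x : Hp, x ∈ Dp ↔ ∃ ℓ, x ∈ F ℓ)
    (hDpd : Dense (Dp : Set Hp))
    (π : A → (Dp →ₗ[ℂ] Hp))
    (hπD : ∀ a (d : Dp), π a d ∈ Dp)
    (hπinv : ∀ a ℓ (d : Dp), (d : Hp) ∈ F ℓ → π a d ∈ F ℓ)
    (hπperp : ∀ a ℓ (d : Dp), (d : Hp) ∈ (F ℓ)ᗮ → π a d ∈ (F ℓ)ᗮ)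
    (hπbdd : ∀ a ℓ, ∃ C : ℝ, 0 ≤ C ∧ ∀ d : Dp, (d : Hp) ∈ F ℓ → ‖π a d‖ ≤ C * ‖(d : Hp)‖)
    (hπ1 : ∀ d : Dp, π 1 d = (d : Hp))
    (hπmul : ∀ a b (d : Dp), π (a * b) d = π a ⟨π b d, hπD b d⟩)
    (hπadd : ∀ a b (d : Dp), π (a + b) d = π a d + π b d)
    (hπstar : ∀ a (d d' : Dp),
      (inner ℂ (π a d) ((d' : Hp)) : ℂ) = inner ℂ ((d : Hp)) (π (star a) d'))
    (V : H →L[ℂ] Hp) (hVc : ‖V‖ ≤ 1)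
    (hVE : ∀ ℓ (x : H), x ∈ E ℓ → V x ∈ F ℓ)
    (hVD : ∀ d : Dsub, V (d : H) ∈ Dp)
    (φ : A → (Dsub →ₗ[ℂ] H))
    (hφ : LocCPCC p E Dsub φ)
    (hdil : ∀ a (d : Dsub),
      φ a d = (ContinuousLinearMap.adjoint V) (π a ⟨V (d : H), hVD d⟩))
    (hmin : ∀ ℓ, F ℓ = minSp E Dp π V ℓ)
    (T : Hp →L[ℂ] Hp)
    (hTinv : ∀ ℓ (x : Hp), x ∈ F ℓ → T x ∈ F ℓ)
    (hTperp : ∀ ℓ (x : Hp), x ∈ (F ℓ)ᗮ → T x ∈ (F ℓ)ᗮ)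
    (hTcomm : ∀ a (d d' : Dp), (d' : Hp) = T ((d : Hp)) → T (π a d) = π a d')
    (hzero : ∀ a (d : Dsub),
      (ContinuousLinearMap.adjoint V) (T (π a ⟨V (d : H), hVD d⟩)) = 0) :
    T = 0 := by
  classical
  -- The generating sets
  set S : Ω → Set Hp := fun ℓ =>
    {y : Hp | ∃ (a : A) (h : H), h ∈ E ℓ ∧ ∃ hm : V h ∈ Dp, y = π a ⟨V h, hm⟩} with hS
  -- Step 0: the orthogonality of `T y` to all generators
  have horth : ∀ (ℓ' : Ω) (s : Hp), s ∈ S ℓ' → ∀ (ℓ : Ω) (y : Hp), y ∈ S ℓ →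
      (inner ℂ s (T y) : ℂ) = 0 := by
    rintro ℓ' s ⟨b, h', hh', hm', rfl⟩ ℓ y ⟨a, h, hh, hm, rfl⟩
    have hhD : h ∈ Dsub := (hD h).mpr ⟨ℓ, hh⟩
    have hh'D : h' ∈ Dsub := (hD h').mpr ⟨ℓ', hh'⟩
    have hTVh : T (V h) ∈ Dp := (hDp _).mpr ⟨ℓ, hTinv ℓ _ (hVE ℓ h hh)⟩
    set dTVh : Dp := ⟨T (V h), hTVh⟩ with hdTVh
    have hc1 : T (π a ⟨V h, hm⟩) = π a dTVh := hTcomm a ⟨V h, hm⟩ dTVh rfl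
    rw [hc1]
    have hstar := hπstar b (⟨V h', hm'⟩ : Dp) ⟨π a dTVh, hπD a dTVh⟩
    -- ⟪π b ⟨Vh'⟩, π a dTVh⟫ = ⟪V h', π (star b) ⟨π a dTVh⟩⟫
    have hmul : π (star b * a) dTVh = π (star b) ⟨π a dTVh, hπD a dTVh⟩ :=
      hπmul (star b) a dTVh
    have hc2 : π (star b * a) dTVh = T (π (star b * a) ⟨V h, hm⟩) :=
      (hTcomm (star b * a) ⟨V h, hm⟩ dTVh rfl).symm
    have hz : (ContinuousLinearMap.adjoint V) (T (π (star b * a) ⟨V h, hm⟩)) = 0 := by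
      have := hzero (star b * a) (⟨h, hhD⟩ : Dsub)
      simpa using this
    calc (inner ℂ (π b ⟨V h', hm'⟩) (π a dTVh) : ℂ)
        = inner ℂ (V h') (π (star b) ⟨π a dTVh, hπD a dTVh⟩) := hstar
      _ = inner ℂ (V h') (T (π (star b * a) ⟨V h, hm⟩)) := by rw [← hmul, hc2]
      _ = inner ℂ h' ((ContinuousLinearMap.adjoint V) (T (π (star b * a) ⟨V h, hm⟩))) := by
            rw [ContinuousLinearMap.adjoint_inner_right]
      _ = 0 := by rw [hz, inner_zero_right]
  -- Step 1: T kills each generator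
  have key : ∀ (ℓ : Ω) (y : Hp), y ∈ S ℓ → T y = 0 := by
    intro ℓ y hy
    obtain ⟨a, h, hh, hm, hyv⟩ := hy
    have hyF : y ∈ F ℓ := by
      rw [hyv]; exact hπinv a ℓ ⟨V h, hm⟩ (hVE ℓ h hh)
    have hTyF : T y ∈ F ℓ := hTinv ℓ y hyF
    -- T y is orthogonal to F ℓ
    have hperp : ∀ u ∈ F ℓ, (inner ℂ (T y) u : ℂ) = 0 := by
      intro u hu
      have hker : Submodule.span ℂ (S ℓ) ≤ LinearMap.ker ((innerSL ℂ (T y)) : Hp →ₗ[ℂ] ℂ) := by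
        rw [Submodule.span_le]
        intro s hs
        simp only [SetLike.mem_coe, LinearMap.mem_ker, ContinuousLinearMap.coe_coe,
          innerSL_apply_apply]
        have h0 : (inner ℂ s (T y) : ℂ) = 0 := horth ℓ s hs ℓ y ⟨a, h, hh, hm, hyv⟩
        rw [← inner_conj_symm, h0, map_zero]
      have hclosed : IsClosed ((LinearMap.ker ((innerSL ℂ (T y)) : Hp →ₗ[ℂ] ℂ) : Submodule ℂ Hp) : Set Hp) :=
        ContinuousLinearMap.isClosed_ker (innerSL ℂ (T y))
      have hle : F ℓ ≤ LinearMap.ker ((innerSL ℂ (T y)) : Hp →ₗ[ℂ] ℂ) := by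
        rw [hmin ℓ]
        exact Submodule.topologicalClosure_minimal _ hker hclosed
      simpa using hle hu
    have : (inner ℂ (T y) (T y) : ℂ) = 0 := hperp (T y) hTyF
    exact inner_self_eq_zero.mp this
  -- Step 2: T vanishes on each F ℓ
  have keyF : ∀ (ℓ : Ω) (x : Hp), x ∈ F ℓ → T x = 0 := by
    intro ℓ x hx
    have hker : Submodule.span ℂ (S ℓ) ≤ LinearMap.ker (T : Hp →ₗ[ℂ] Hp) := by
      rw [Submodule.span_le]
      intro s hs
      simp only [SetLike.mem_coe, LinearMap.mem_ker, ContinuousLinearMap.coe_coe]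
      exact key ℓ s hs
    have hclosed : IsClosed ((LinearMap.ker (T : Hp →ₗ[ℂ] Hp) : Submodule ℂ Hp) : Set Hp) := ContinuousLinearMap.isClosed_ker T
    have hle : F ℓ ≤ LinearMap.ker (T : Hp →ₗ[ℂ] Hp) := by
      rw [hmin ℓ]
      exact Submodule.topologicalClosure_minimal _ hker hclosed
    simpa using hle hx
  -- Step 3: T vanishes on Dp, hence everywhere by density
  have hDp0 : ∀ x ∈ Dp, T x = 0 := by
    intro x hx
    obtain ⟨ℓ, hℓ⟩ := (hDp x).mp hx
    exact keyF ℓ x hℓ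
  ext x
  have hclosed : IsClosed {x : Hp | T x = 0} := isClosed_eq T.continuous continuous_const
  have hsub : (Dp : Set Hp) ⊆ {x : Hp | T x = 0} := fun x hx => hDp0 x hx
  have hx : x ∈ closure (Dp : Set Hp) := hDpd x
  exact hclosed.closure_subset (closure_mono hsub hx)
end

section
/- Let {H; E; D} and {K; F; O} be quantized domains over the same index set Ω, and let C*_{E,F}(D,O) be the set of linear operators T : D → O with T(H_ℓ) ⊆ K_ℓ, T(H_ℓ^⊥ ∩ D) ⊆ K_ℓ^⊥ ∩ O, and T|_{H_ℓ} bounded for all ℓ. Then C*_{E,F}(D,O), with right action (T,S) ↦ TS of C*_E(D) and inner product ⟨T,S⟩ = T*S, is a Hilbert module over the locally C*-algebra C*_E(D), complete with respect to the seminorms q_ℓ(T) = ‖T|_{H_ℓ}‖. -/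
open scoped ComplexOrder

/-- An element of `C*_{E,F}(D,O)`: a linear operator `T : D → O` with `T(Hℓ) ⊆ Kℓ`,
`T(Hℓ^⊥ ∩ D) ⊆ Kℓ^⊥ ∩ O`, and `T|_{Hℓ}` bounded for every `ℓ`. -/
structure HomOp {Ω : Type*}
    {H : Type*} [NormedAddCommGroup H] [InnerProductSpace ℂ H]
    {K : Type*} [NormedAddCommGroup K] [InnerProductSpace ℂ K]
    (E : Ω → Submodule ℂ H) (Dsub : Submodule ℂ H)
    (F : Ω → Submodule ℂ K) (Osub : Submodule ℂ K) where
  toFun : Dsub →ₗ[ℂ] K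
  memO : ∀ d : Dsub, toFun d ∈ Osub
  inv : ∀ (ℓ : Ω) (d : Dsub), (d : H) ∈ E ℓ → toFun d ∈ F ℓ
  perp : ∀ (ℓ : Ω) (d : Dsub), (d : H) ∈ (E ℓ)ᗮ → toFun d ∈ (F ℓ)ᗮ
  bdd : ∀ ℓ : Ω, ∃ C : ℝ, 0 ≤ C ∧ ∀ d : Dsub, (d : H) ∈ E ℓ → ‖toFun d‖ ≤ C * ‖(d : H)‖

open scoped InnerProductSpace

set_option linter.unusedSectionVars false

section Aux

variable {Ω : Type*}
    {H : Type*} [NormedAddCommGroup H] [InnerProductSpace ℂ H] [CompleteSpace H]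
    {K : Type*} [NormedAddCommGroup K] [InnerProductSpace ℂ K] [CompleteSpace K]
    {E : Ω → Submodule ℂ H} {Dsub : Submodule ℂ H}
    {F : Ω → Submodule ℂ K} {Osub : Submodule ℂ K}

/-- Key decomposition lemma: for `y ∈ F ℓ`, `⟪T d, y⟫ = ⟪T (P_ℓ d), y⟫`. -/
theorem homop_inner_proj (hEc : ∀ ℓ, IsClosed (E ℓ : Set H))
    (hD : ∀ x : H, x ∈ Dsub ↔ ∃ ℓ, x ∈ E ℓ)
    (T : HomOp E Dsub F Osub) (ℓ : Ω) {y : K} (hy : y ∈ F ℓ) (d : Dsub) :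
    haveI : CompleteSpace (E ℓ) := (hEc ℓ).completeSpace_coe
    ⟪T.toFun d, y⟫_ℂ =
      ⟪T.toFun ⟨(Submodule.orthogonalProjectionOnto (E ℓ) d : H), (hD _).2 ⟨ℓ, (Submodule.orthogonalProjectionOnto (E ℓ) (d : H)).2⟩⟩, y⟫_ℂ := by
  haveI : CompleteSpace (E ℓ) := (hEc ℓ).completeSpace_coe
  set p : Dsub := ⟨(Submodule.orthogonalProjectionOnto (E ℓ) d : H), (hD _).2 ⟨ℓ, (Submodule.orthogonalProjectionOnto (E ℓ) (d : H)).2⟩⟩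
  have hsub : (↑(d - p) : H) ∈ (E ℓ)ᗮ := Submodule.sub_starProjection_mem_orthogonal (K := E ℓ) (d : H)
  have h0 : ⟪T.toFun (d - p), y⟫_ℂ = 0 := by
    have h := (Submodule.mem_orthogonal _ _).1 (T.perp ℓ (d - p) hsub) y hy
    exact inner_eq_zero_symm.1 h
  have : T.toFun d = T.toFun p + T.toFun (d - p) := by
    rw [← map_add]; congr 1; abel
  rw [this, inner_add_left, h0, add_zero]

end Aux

set_option linter.unusedSectionVars false

section Aux2
variable {Ω : Type*}
    {H : Type*} [NormedAddCommGroup H] [InnerProductSpace ℂ H] [CompleteSpace H]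
    {K : Type*} [NormedAddCommGroup K] [InnerProductSpace ℂ K] [CompleteSpace K]
    {E : Ω → Submodule ℂ H} {Dsub : Submodule ℂ H}
    {F : Ω → Submodule ℂ K} {Osub : Submodule ℂ K}

/-- Existence of the adjoint value `w = (T*S) d'`. -/
theorem homop_adj_exists (hEc : ∀ ℓ, IsClosed (E ℓ : Set H))
    (hD : ∀ x : H, x ∈ Dsub ↔ ∃ ℓ, x ∈ E ℓ)
    (T S : HomOp E Dsub F Osub) (d' : Dsub) :
    ∃ w : Dsub, ∀ d : Dsub, ⟪T.toFun d, S.toFun d'⟫_ℂ = ⟪(d : H), (w : H)⟫_ℂ := by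
  obtain ⟨ℓ, hℓ⟩ := (hD d').1 d'.2
  haveI : CompleteSpace (E ℓ) := (hEc ℓ).completeSpace_coe
  have hle : E ℓ ≤ Dsub := fun x hx => (hD x).2 ⟨ℓ, hx⟩
  obtain ⟨C, hC0, hC⟩ := T.bdd ℓ
  set g : E ℓ →ₗ[ℂ] K := T.toFun.comp (Submodule.inclusion hle) with hgdef
  have hg : ∀ x : E ℓ, ‖g x‖ ≤ C * ‖x‖ := fun x => hC _ x.2
  set Tc : E ℓ →L[ℂ] K := LinearMap.mkContinuous g C hg with hTcdef
  set w0 : E ℓ := (ContinuousLinearMap.adjoint Tc) (S.toFun d') with hw0def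
  refine ⟨⟨(w0 : H), hle w0.2⟩, fun d => ?_⟩
  have hSd' : S.toFun d' ∈ F ℓ := S.inv ℓ d' hℓ
  have key := homop_inner_proj hEc hD T ℓ hSd' d
  set p : E ℓ := Submodule.orthogonalProjectionOnto (E ℓ) (d : H) with hpdef
  have hTp : T.toFun ⟨(p : H), (hD _).2 ⟨ℓ, p.2⟩⟩ = Tc p := by
    show T.toFun _ = g p
    rw [hgdef]
    simp only [LinearMap.comp_apply]
    congr 1
  have h1 : ⟪T.toFun d, S.toFun d'⟫_ℂ = ⟪(p : H), (w0 : H)⟫_ℂ := by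
    rw [key, hTp, ← ContinuousLinearMap.adjoint_inner_right, ← hw0def, Submodule.coe_inner]
  have hsub : (d : H) - (p : H) ∈ (E ℓ)ᗮ := Submodule.sub_starProjection_mem_orthogonal (K := E ℓ) (d : H)
  have h2 : ⟪(d : H) - (p : H), (w0 : H)⟫_ℂ = 0 :=
    (Submodule.mem_orthogonal' _ _).1 hsub _ w0.2
  have h3 : ⟪(d : H), (w0 : H)⟫_ℂ = ⟪(p : H), (w0 : H)⟫_ℂ := by
    have h4 := inner_sub_left (𝕜 := ℂ) (d : H) (p : H) (w0 : H)
    rw [h2] at h4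
    have := h4.symm
    rw [sub_eq_zero] at this
    exact this
  rw [h1, ← h3]

/-- Uniqueness via density. -/
theorem dense_inner_ext (hDd : Dense (Dsub : Set H)) {w1 w2 : H}
    (h : ∀ d : Dsub, ⟪(d : H), w1⟫_ℂ = ⟪(d : H), w2⟫_ℂ) : w1 = w2 := by
  refine ext_inner_left ℂ fun v => ?_
  have hcont1 : Continuous fun x : H => ⟪x, w1⟫_ℂ := continuous_id.inner continuous_const
  have hcont2 : Continuous fun x : H => ⟪x, w2⟫_ℂ := continuous_id.inner continuous_const
  have := Continuous.ext_on hDd hcont1 hcont2 (fun x hx => h ⟨x, hx⟩)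
  exact congrFun this v
end Aux2

section Aux3
variable {Ω : Type*}
    {H : Type*} [NormedAddCommGroup H] [InnerProductSpace ℂ H] [CompleteSpace H]
    {K : Type*} [NormedAddCommGroup K] [InnerProductSpace ℂ K] [CompleteSpace K]
    {E : Ω → Submodule ℂ H} {Dsub : Submodule ℂ H}
    {F : Ω → Submodule ℂ K} {Osub : Submodule ℂ K}

theorem homop_adj_mem (hEc : ∀ ℓ, IsClosed (E ℓ : Set H))
    (hD : ∀ x : H, x ∈ Dsub ↔ ∃ ℓ, x ∈ E ℓ) (hDd : Dense (Dsub : Set H))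
    (T S : HomOp E Dsub F Osub) (d' : Dsub) (w : Dsub)
    (hw : ∀ d : Dsub, ⟪T.toFun d, S.toFun d'⟫_ℂ = ⟪(d : H), (w : H)⟫_ℂ)
    (ℓ : Ω) (hℓ : (d' : H) ∈ E ℓ) : (w : H) ∈ E ℓ := by
  haveI : CompleteSpace (E ℓ) := (hEc ℓ).completeSpace_coe
  rw [← Submodule.orthogonal_orthogonal (E ℓ)]
  refine (Submodule.mem_orthogonal _ _).2 fun v hv => ?_
  set φ : H → ℂ := fun x => ⟪x - ((Submodule.orthogonalProjectionOnto (E ℓ) x : E ℓ) : H), (w : H)⟫_ℂ with hφ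
  have hcont : Continuous φ :=
    (continuous_id.sub (continuous_subtype_val.comp (Submodule.orthogonalProjectionOnto (E ℓ)).continuous)).inner
      continuous_const
  have hzero : Set.EqOn φ (fun _ => (0 : ℂ)) (Dsub : Set H) := by
    intro x hx
    have hpx : ((Submodule.orthogonalProjectionOnto (E ℓ) x : E ℓ) : H) ∈ Dsub :=
      (hD _).2 ⟨ℓ, (Submodule.orthogonalProjectionOnto (E ℓ) x).2⟩
    set d : Dsub := ⟨x - _, Submodule.sub_mem _ hx hpx⟩
    have hdperp : (d : H) ∈ (E ℓ)ᗮ := Submodule.sub_starProjection_mem_orthogonal (K := E ℓ) x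
    have : φ x = ⟪T.toFun d, S.toFun d'⟫_ℂ := (hw d).symm
    rw [this]
    exact (Submodule.mem_orthogonal' _ _).1 (T.perp ℓ d hdperp) _ (S.inv ℓ d' hℓ)
  have hall : φ = fun _ => (0 : ℂ) := Continuous.ext_on hDd hcont continuous_const hzero
  have hv0 : Submodule.orthogonalProjectionOnto (E ℓ) v = 0 :=
    Submodule.orthogonalProjectionOnto_apply_of_mem_orthogonal hv
  have := congrFun hall v
  rw [hφ] at this
  simpa [hv0] using this

theorem homop_adj_perp (hD : ∀ x : H, x ∈ Dsub ↔ ∃ ℓ, x ∈ E ℓ)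
    (T S : HomOp E Dsub F Osub) (d' : Dsub) (w : Dsub)
    (hw : ∀ d : Dsub, ⟪T.toFun d, S.toFun d'⟫_ℂ = ⟪(d : H), (w : H)⟫_ℂ)
    (ℓ : Ω) (hℓ : (d' : H) ∈ (E ℓ)ᗮ) : (w : H) ∈ (E ℓ)ᗮ := by
  refine (Submodule.mem_orthogonal _ _).2 fun u hu => ?_
  set d : Dsub := ⟨u, (hD u).2 ⟨ℓ, hu⟩⟩
  have : ⟪(u : H), (w : H)⟫_ℂ = ⟪T.toFun d, S.toFun d'⟫_ℂ := (hw d).symm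
  rw [this]
  exact (Submodule.mem_orthogonal _ _).1 (S.perp ℓ d' hℓ) _ (T.inv ℓ d hu)

theorem homop_adj_bdd
    (T S : HomOp E Dsub F Osub) (d' : Dsub) (w : Dsub)
    (hw : ∀ d : Dsub, ⟪T.toFun d, S.toFun d'⟫_ℂ = ⟪(d : H), (w : H)⟫_ℂ)
    (ℓ : Ω) (hℓ : (d' : H) ∈ E ℓ) (hwℓ : (w : H) ∈ E ℓ)
    {CT CS : ℝ} (hCT : ∀ d : Dsub, (d : H) ∈ E ℓ → ‖T.toFun d‖ ≤ CT * ‖(d : H)‖)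
    (hCS : ∀ d : Dsub, (d : H) ∈ E ℓ → ‖S.toFun d‖ ≤ CS * ‖(d : H)‖)
    (hCT0 : 0 ≤ CT) (hCS0 : 0 ≤ CS) :
    ‖(w : H)‖ ≤ CT * CS * ‖(d' : H)‖ := by
  have h1 : ⟪(w : H), (w : H)⟫_ℂ = ⟪T.toFun w, S.toFun d'⟫_ℂ := (hw w).symm
  have h2 : ‖(w : H)‖ ^ 2 = ‖⟪T.toFun w, S.toFun d'⟫_ℂ‖ := by
    rw [← h1, inner_self_eq_norm_sq_to_K]
    simp [norm_pow]
  have h3 : ‖⟪T.toFun w, S.toFun d'⟫_ℂ‖ ≤ ‖T.toFun w‖ * ‖S.toFun d'‖ := norm_inner_le_norm _ _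
  have h4 : ‖T.toFun w‖ ≤ CT * ‖(w : H)‖ := hCT w hwℓ
  have h5 : ‖S.toFun d'‖ ≤ CS * ‖(d' : H)‖ := hCS d' hℓ
  have hq : ‖(w : H)‖ ^ 2 ≤ (CT * CS * ‖(d' : H)‖) * ‖(w : H)‖ := by
    calc ‖(w : H)‖ ^ 2 ≤ ‖T.toFun w‖ * ‖S.toFun d'‖ := h2 ▸ h3
      _ ≤ (CT * ‖(w : H)‖) * (CS * ‖(d' : H)‖) :=
          mul_le_mul h4 h5 (norm_nonneg _) (by positivity)
      _ = (CT * CS * ‖(d' : H)‖) * ‖(w : H)‖ := by ring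
  rcases eq_or_lt_of_le (norm_nonneg ((w : H))) with h | h
  · rw [← h]; positivity
  · have := (mul_le_mul_iff_left₀ h).1 (by nlinarith : ‖(w : H)‖ * ‖(w : H)‖ ≤ (CT * CS * ‖(d' : H)‖) * ‖(w : H)‖)
    exact this
end Aux3

theorem my_inner_self_nonneg (K : Type*) [NormedAddCommGroup K] [InnerProductSpace ℂ K] (x : K) :
    0 ≤ (inner ℂ x x : ℂ) := by
  rw [Complex.le_def]
  constructor
  · have h := inner_self_nonneg (𝕜 := ℂ) (x := x)
    rwa [RCLike.re_to_complex] at h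
  · have h : (inner ℂ x x : ℂ).im = 0 := by
      rw [← RCLike.im_to_complex]; exact inner_self_im (𝕜 := ℂ) x
    simp only [h, Complex.zero_im]

/-- `C*_{E,F}(D,O)` with the right action `(T,S) ↦ T∘S` of `C*_E(D)` and
the inner product `⟨T,S⟩ = T*S` is a Hilbert module over the locally C*-algebra
`C*_E(D)`, complete with respect to the seminorms `qℓ(T) = ‖T|_{Hℓ}‖`. -/
theorem stmt16
    {Ω : Type*} [Preorder Ω] [IsDirected Ω (· ≤ ·)] [Nonempty Ω]
    {H : Type*} [NormedAddCommGroup H] [InnerProductSpace ℂ H] [CompleteSpace H]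
    {K : Type*} [NormedAddCommGroup K] [InnerProductSpace ℂ K] [CompleteSpace K]
    (E : Ω → Submodule ℂ H)
    (hEc : ∀ ℓ, IsClosed (E ℓ : Set H)) (hEm : Monotone E)
    (Dsub : Submodule ℂ H)
    (hD : ∀ x : H, x ∈ Dsub ↔ ∃ ℓ, x ∈ E ℓ)
    (hDd : Dense (Dsub : Set H))
    (F : Ω → Submodule ℂ K)
    (hFc : ∀ ℓ, IsClosed (F ℓ : Set K)) (hFm : Monotone F)
    (Osub : Submodule ℂ K)
    (hO : ∀ x : K, x ∈ Osub ↔ ∃ ℓ, x ∈ F ℓ)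
    (hOd : Dense (Osub : Set K)) :
    -- closed under addition and scalar multiplication:
    (∀ T S : HomOp E Dsub F Osub, ∃ W : HomOp E Dsub F Osub,
      ∀ d : Dsub, W.toFun d = T.toFun d + S.toFun d) ∧
    (∀ (c : ℂ) (T : HomOp E Dsub F Osub), ∃ W : HomOp E Dsub F Osub,
      ∀ d : Dsub, W.toFun d = c • T.toFun d) ∧
    -- right `C*_E(D)`-module action `(T, S) ↦ T ∘ S`:
    (∀ (T : HomOp E Dsub F Osub) (S : HomOp E Dsub E Dsub),
      ∃ W : HomOp E Dsub F Osub,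
        ∀ d : Dsub, W.toFun d = T.toFun ⟨S.toFun d, S.memO d⟩) ∧
    -- `C*_E(D)`-valued inner product `⟨T,S⟩ = T*S`:
    (∀ T S : HomOp E Dsub F Osub, ∃ IP : HomOp E Dsub E Dsub,
      ∀ d d' : Dsub, (inner ℂ (T.toFun d) (S.toFun d') : ℂ) = inner ℂ ((d : H)) (IP.toFun d')) ∧
    -- `⟨T,T⟩ ≥ 0`, with definiteness:
    (∀ (T : HomOp E Dsub F Osub) (IP : HomOp E Dsub E Dsub),
      (∀ d d' : Dsub, (inner ℂ (T.toFun d) (T.toFun d') : ℂ) = inner ℂ ((d : H)) (IP.toFun d')) →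
      (∀ d : Dsub, 0 ≤ (inner ℂ ((d : H)) (IP.toFun d) : ℂ)) ∧
      ((∀ d : Dsub, IP.toFun d = 0) → ∀ d : Dsub, T.toFun d = 0)) ∧
    -- completeness for the seminorms `qℓ`:
    (∀ T : ℕ → HomOp E Dsub F Osub,
      (∀ (ℓ : Ω) (ε : ℝ), 0 < ε → ∃ N : ℕ, ∀ m n : ℕ, N ≤ m → N ≤ n →
        ∀ d : Dsub, (d : H) ∈ E ℓ → ‖(T m).toFun d - (T n).toFun d‖ ≤ ε * ‖(d : H)‖) →
      ∃ L : HomOp E Dsub F Osub, ∀ (ℓ : Ω) (ε : ℝ), 0 < ε → ∃ N : ℕ, ∀ n : ℕ, N ≤ n →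
        ∀ d : Dsub, (d : H) ∈ E ℓ → ‖(T n).toFun d - L.toFun d‖ ≤ ε * ‖(d : H)‖) := by
  refine ⟨?_, ?_, ?_, ?_, ?_, ?_⟩
  · -- addition
    intro T S
    refine ⟨⟨T.toFun + S.toFun, ?_, ?_, ?_, ?_⟩, fun d => rfl⟩
    · intro d; exact Submodule.add_mem _ (T.memO d) (S.memO d)
    · intro ℓ d hd; exact Submodule.add_mem _ (T.inv ℓ d hd) (S.inv ℓ d hd)
    · intro ℓ d hd; exact Submodule.add_mem _ (T.perp ℓ d hd) (S.perp ℓ d hd)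
    · intro ℓ
      obtain ⟨C1, hC10, hC1⟩ := T.bdd ℓ
      obtain ⟨C2, hC20, hC2⟩ := S.bdd ℓ
      refine ⟨C1 + C2, by positivity, fun d hd => ?_⟩
      calc ‖(T.toFun + S.toFun) d‖ ≤ ‖T.toFun d‖ + ‖S.toFun d‖ := norm_add_le _ _
        _ ≤ C1 * ‖(d : H)‖ + C2 * ‖(d : H)‖ := add_le_add (hC1 d hd) (hC2 d hd)
        _ = (C1 + C2) * ‖(d : H)‖ := by ring
  · -- scalar multiplication
    intro c T
    refine ⟨⟨c • T.toFun, ?_, ?_, ?_, ?_⟩, fun d => rfl⟩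
    · intro d; exact Submodule.smul_mem _ _ (T.memO d)
    · intro ℓ d hd; exact Submodule.smul_mem _ _ (T.inv ℓ d hd)
    · intro ℓ d hd; exact Submodule.smul_mem _ _ (T.perp ℓ d hd)
    · intro ℓ
      obtain ⟨C, hC0, hC⟩ := T.bdd ℓ
      refine ⟨‖c‖ * C, by positivity, fun d hd => ?_⟩
      calc ‖(c • T.toFun) d‖ = ‖c‖ * ‖T.toFun d‖ := by
            simp [norm_smul]
        _ ≤ ‖c‖ * (C * ‖(d : H)‖) := by
            exact mul_le_mul_of_nonneg_left (hC d hd) (norm_nonneg c)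
        _ = ‖c‖ * C * ‖(d : H)‖ := by ring
  · -- composition (right module action)
    intro T S
    set Slin : Dsub →ₗ[ℂ] Dsub :=
      { toFun := fun d => ⟨S.toFun d, S.memO d⟩
        map_add' := fun a b => by ext; simp
        map_smul' := fun c a => by ext; simp }
    refine ⟨⟨T.toFun.comp Slin, ?_, ?_, ?_, ?_⟩, fun d => rfl⟩
    · intro d; exact T.memO _
    · intro ℓ d hd; exact T.inv ℓ _ (S.inv ℓ d hd)
    · intro ℓ d hd; exact T.perp ℓ _ (S.perp ℓ d hd)
    · intro ℓ
      obtain ⟨C1, hC10, hC1⟩ := T.bdd ℓ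
      obtain ⟨C2, hC20, hC2⟩ := S.bdd ℓ
      refine ⟨C1 * C2, by positivity, fun d hd => ?_⟩
      have h1 : (Slin d : H) ∈ E ℓ := S.inv ℓ d hd
      calc ‖T.toFun (Slin d)‖ ≤ C1 * ‖(Slin d : H)‖ := hC1 _ h1
        _ ≤ C1 * (C2 * ‖(d : H)‖) := mul_le_mul_of_nonneg_left (hC2 d hd) hC10
        _ = C1 * C2 * ‖(d : H)‖ := by ring
  · -- inner product ⟨T,S⟩ = T*S
    intro T S
    choose wfun hwfun using fun d' => homop_adj_exists hEc hD T S d'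
    have hadd : ∀ a b : Dsub, wfun (a + b) = wfun a + wfun b := by
      intro a b
      refine Subtype.coe_injective (dense_inner_ext hDd fun d => ?_)
      rw [← hwfun (a + b) d]
      push_cast
      rw [inner_add_right, ← hwfun a d, ← hwfun b d, map_add, inner_add_right]
    have hsmul : ∀ (c : ℂ) (a : Dsub), wfun (c • a) = c • wfun a := by
      intro c a
      refine Subtype.coe_injective (dense_inner_ext hDd fun d => ?_)
      rw [← hwfun (c • a) d]
      push_cast
      rw [inner_smul_right, ← hwfun a d, map_smul, inner_smul_right]
    set IPlin : Dsub →ₗ[ℂ] H :=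
      { toFun := fun d' => (wfun d' : H)
        map_add' := fun a b => by
          show ((wfun (a + b) : Dsub) : H) = ((wfun a : Dsub) : H) + ((wfun b : Dsub) : H)
          rw [hadd]; push_cast; ring
        map_smul' := fun c a => by
          show ((wfun (c • a) : Dsub) : H) = c • ((wfun a : Dsub) : H)
          rw [hsmul]; push_cast; ring }
    refine ⟨⟨IPlin, fun d => (wfun d).2, ?_, ?_, ?_⟩, fun d d' => hwfun d' d⟩
    · intro ℓ d hd
      exact homop_adj_mem hEc hD hDd T S d (wfun d) (hwfun d) ℓ hd
    · intro ℓ d hd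
      exact homop_adj_perp hD T S d (wfun d) (hwfun d) ℓ hd
    · intro ℓ
      obtain ⟨C1, hC10, hC1⟩ := T.bdd ℓ
      obtain ⟨C2, hC20, hC2⟩ := S.bdd ℓ
      refine ⟨C1 * C2, by positivity, fun d hd => ?_⟩
      exact homop_adj_bdd T S d (wfun d) (hwfun d) ℓ hd
        (homop_adj_mem hEc hD hDd T S d (wfun d) (hwfun d) ℓ hd) hC1 hC2 hC10 hC20
  · -- positivity and definiteness
    intro T IP hIP
    constructor
    · intro d
      rw [← hIP d d]
      exact my_inner_self_nonneg K _
    · intro h0 d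
      have : (inner ℂ (T.toFun d) (T.toFun d) : ℂ) = 0 := by
        rw [hIP d d, h0 d, inner_zero_right]
      exact inner_self_eq_zero.1 this
  · -- completeness
    intro T hT
    have hconv : ∀ d : Dsub, ∃ y : K,
        Filter.Tendsto (fun n => (T n).toFun d) Filter.atTop (nhds y) := by
      intro d
      obtain ⟨ℓ, hℓ⟩ := (hD d).1 d.2
      have hc : CauchySeq fun n => (T n).toFun d := by
        refine Metric.cauchySeq_iff.2 fun ε hε => ?_
        obtain ⟨N, hN⟩ := hT ℓ (ε / (2 * (‖(d : H)‖ + 1)))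
          (by positivity)
        refine ⟨N, fun m hm n hn => ?_⟩
        rw [dist_eq_norm]
        calc ‖(T m).toFun d - (T n).toFun d‖
            ≤ ε / (2 * (‖(d : H)‖ + 1)) * ‖(d : H)‖ := hN m n hm hn d hℓ
          _ < ε := by
              rw [div_mul_eq_mul_div, div_lt_iff₀ (by positivity)]
              nlinarith [norm_nonneg ((d : H))]
      exact cauchySeq_tendsto_of_complete hc
    choose Lf hLf using hconv
    have hLadd : ∀ a b : Dsub, Lf (a + b) = Lf a + Lf b := by
      intro a b
      refine tendsto_nhds_unique (hLf (a + b)) ?_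
      have : (fun n => (T n).toFun (a + b)) = fun n => (T n).toFun a + (T n).toFun b := by
        funext n; rw [map_add]
      rw [this]
      exact (hLf a).add (hLf b)
    have hLsmul : ∀ (c : ℂ) (a : Dsub), Lf (c • a) = c • Lf a := by
      intro c a
      refine tendsto_nhds_unique (hLf (c • a)) ?_
      have : (fun n => (T n).toFun (c • a)) = fun n => c • (T n).toFun a := by
        funext n; rw [map_smul]
      rw [this]
      exact (hLf a).const_smul c
    set Llin : Dsub →ₗ[ℂ] K :=
      { toFun := Lf, map_add' := hLadd, map_smul' := hLsmul }
    have hmemF : ∀ (ℓ : Ω) (d : Dsub), (d : H) ∈ E ℓ → Lf d ∈ F ℓ := by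
      intro ℓ d hd
      exact (hFc ℓ).mem_of_tendsto (hLf d)
        (Filter.Eventually.of_forall fun n => (T n).inv ℓ d hd)
    have happrox : ∀ (ℓ : Ω) (ε : ℝ), 0 < ε → ∃ N : ℕ, ∀ n : ℕ, N ≤ n →
        ∀ d : Dsub, (d : H) ∈ E ℓ → ‖(T n).toFun d - Lf d‖ ≤ ε * ‖(d : H)‖ := by
      intro ℓ ε hε
      obtain ⟨N, hN⟩ := hT ℓ ε hε
      refine ⟨N, fun n hn d hd => ?_⟩
      have hclosed : IsClosed {y : K | ‖(T n).toFun d - y‖ ≤ ε * ‖(d : H)‖} := by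
        have : {y : K | ‖(T n).toFun d - y‖ ≤ ε * ‖(d : H)‖} =
            Metric.closedBall ((T n).toFun d) (ε * ‖(d : H)‖) := by
          ext y; simp [Metric.mem_closedBall, dist_eq_norm, norm_sub_rev]
        rw [this]; exact Metric.isClosed_closedBall
      exact hclosed.mem_of_tendsto (hLf d)
        (Filter.eventually_atTop.2 ⟨N, fun m hm => hN n m hn hm d hd⟩)
    refine ⟨⟨Llin, ?_, hmemF, ?_, ?_⟩, happrox⟩
    · intro d
      obtain ⟨ℓ, hℓ⟩ := (hD d).1 d.2
      exact (hO _).2 ⟨ℓ, hmemF ℓ d hℓ⟩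
    · intro ℓ d hd
      exact Submodule.isClosed_orthogonal (F ℓ) |>.mem_of_tendsto (hLf d)
        (Filter.Eventually.of_forall fun n => (T n).perp ℓ d hd)
    · intro ℓ
      obtain ⟨N, hN⟩ := happrox ℓ 1 one_pos
      obtain ⟨C, hC0, hC⟩ := (T N).bdd ℓ
      refine ⟨C + 1, by positivity, fun d hd => ?_⟩
      calc ‖Llin d‖ = ‖(T N).toFun d - ((T N).toFun d - Lf d)‖ := by
            congr 1; abel
        _ ≤ ‖(T N).toFun d‖ + ‖(T N).toFun d - Lf d‖ := norm_sub_le _ _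
        _ ≤ C * ‖(d : H)‖ + 1 * ‖(d : H)‖ := add_le_add (hC d hd) (hN N le_rfl d hd)
        _ = (C + 1) * ‖(d : H)‖ := by ring
end
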